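/- Let m, n ≥ 1, let q ∈ 𝔽[X]^m with q ≠ 0, and let p ∈ 𝔽[X]^n. There exists an m×n matrix A over L with ‖A‖_∞ < 1 satisfying qA = p if and only if ‖p‖_∞ < ‖q‖_∞. -/

import Mathlib

open MeasureTheory Filter Asymptotics
open scoped Classical

/-- The absolute value on `L`, the field of formal Laurent series in `X⁻¹` over
the finite field `F` with `k = Fintype.card F` elements (here realised as
`LaurentSeries F` in the variable `t = X⁻¹`): `‖x‖ = k ^ (-order x)`, `‖0‖ = 0`. -/
noncomputable def lnorm (F : Type*) [Field F] [Fintype F] (x : LaurentSeries F) : ℝ :=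
  if x = 0 then 0 else (Fintype.card F : ℝ) ^ (-x.order)

/-- The embedding of the polynomial ring `F[X]` into `L`, sending `X` to the
Laurent series with a single term of order `-1` (the element of norm `k`). -/
noncomputable def polyToL (F : Type*) [Field F] [Fintype F] (p : Polynomial F) :
    LaurentSeries F :=
  Polynomial.aeval (HahnSeries.single (-1 : ℤ) (1 : F)) p

/-- Sup norm `‖·‖_∞` of a vector over `L`. -/
noncomputable def vnorm (F : Type*) [Field F] [Fintype F] {ι : Type*}
    (v : ι → LaurentSeries F) : ℝ :=
  ⨆ i, lnorm F (v i)

/-- Sup norm `‖·‖_∞` of a vector of polynomials, viewed inside `L`. -/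
noncomputable def pvnorm (F : Type*) [Field F] [Fintype F] {ι : Type*}
    (q : ι → Polynomial F) : ℝ :=
  vnorm F fun i => polyToL F (q i)

/-- The row vector `q A ∈ L^n`, for `q ∈ F[X]^m` and an `m × n` matrix `A` over `L`. -/
noncomputable def rowMul (F : Type*) [Field F] [Fintype F] {m n : ℕ}
    (q : Fin m → Polynomial F) (A : Fin m → Fin n → LaurentSeries F) :
    Fin n → LaurentSeries F :=
  fun j => ∑ i, polyToL F (q i) * A i j

noncomputable instance (F : Type*) [Field F] [Fintype F] :
    MeasurableSpace (LaurentSeries F) := borel _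

section Aux

variable {F : Type*} [Field F] [Fintype F]

lemma one_lt_K : (1 : ℝ) < (Fintype.card F : ℝ) := by
  exact_mod_cast Fintype.one_lt_card

lemma K_pos : (0 : ℝ) < (Fintype.card F : ℝ) := lt_trans one_pos (one_lt_K (F := F))

lemma lnorm_zero : lnorm F 0 = 0 := by simp [lnorm]

lemma lnorm_nonneg (x : LaurentSeries F) : 0 ≤ lnorm F x := by
  unfold lnorm
  split
  · exact le_refl 0
  · exact (zpow_pos (K_pos (F := F)) _).le

lemma lnorm_pos {x : LaurentSeries F} (hx : x ≠ 0) : 0 < lnorm F x := by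
  unfold lnorm
  rw [if_neg hx]
  exact zpow_pos (K_pos (F := F)) _

lemma lnorm_mul (x y : LaurentSeries F) : lnorm F (x * y) = lnorm F x * lnorm F y := by
  rcases eq_or_ne x 0 with rfl | hx
  · simp [lnorm_zero]
  rcases eq_or_ne y 0 with rfl | hy
  · simp [lnorm_zero]
  have hxy : x * y ≠ 0 := mul_ne_zero hx hy
  unfold lnorm
  rw [if_neg hx, if_neg hy, if_neg hxy, HahnSeries.order_mul hx hy, neg_add,
    zpow_add₀ (ne_of_gt (K_pos (F := F)))]

lemma lnorm_div (x y : LaurentSeries F) (hy : y ≠ 0) :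
    lnorm F (x / y) = lnorm F x / lnorm F y := by
  have h := lnorm_mul (F := F) (x / y) y
  rw [div_mul_cancel₀ _ hy] at h
  field_simp [h, (lnorm_pos hy).ne']
  exact h.symm

lemma lnorm_add_le (x y : LaurentSeries F) :
    lnorm F (x + y) ≤ max (lnorm F x) (lnorm F y) := by
  rcases eq_or_ne x 0 with rfl | hx
  · simp
  rcases eq_or_ne y 0 with rfl | hy
  · simp
  rcases eq_or_ne (x + y) 0 with hxy | hxy
  · rw [hxy, lnorm_zero]
    exact le_max_of_le_left (lnorm_nonneg x)
  have horder := HahnSeries.min_order_le_order_add hxy (x := x) (y := y)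
  unfold lnorm
  rw [if_neg hx, if_neg hy, if_neg hxy]
  rcases le_total x.order y.order with h | h
  · refine le_max_of_le_left (zpow_le_zpow_right₀ (one_lt_K (F := F)).le ?_)
    simp only [min_eq_left h] at horder; omega
  · refine le_max_of_le_right (zpow_le_zpow_right₀ (one_lt_K (F := F)).le ?_)
    simp only [min_eq_right h] at horder; omega

lemma lnorm_sum_le {ι : Type*} (s : Finset ι) (f : ι → LaurentSeries F) {c : ℝ}
    (hc : 0 ≤ c) (h : ∀ i ∈ s, lnorm F (f i) ≤ c) :
    lnorm F (∑ i ∈ s, f i) ≤ c := by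
  classical
  induction s using Finset.cons_induction with
  | empty => simpa [lnorm_zero] using hc
  | cons a s ha ih =>
    rw [Finset.sum_cons]
    refine le_trans (lnorm_add_le _ _) (max_le (h a (Finset.mem_cons_self a s)) ?_)
    exact ih fun i hi => h i (Finset.mem_cons_of_mem hi)

lemma sum_coeff {ι : Type*} (s : Finset ι) (f : ι → LaurentSeries F) (g : ℤ) :
    (∑ i ∈ s, f i).coeff g = ∑ i ∈ s, (f i).coeff g := by
  classical
  induction s using Finset.cons_induction with
  | empty => simp
  | cons a s ha ih => rw [Finset.sum_cons, Finset.sum_cons, HahnSeries.coeff_add, ih]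

lemma polyToL_eq_sum (p : Polynomial F) :
    polyToL F p = ∑ i ∈ p.support, HahnSeries.single (-(i : ℤ)) (p.coeff i) := by
  rw [polyToL, Polynomial.aeval_def, Polynomial.eval₂_eq_sum, Polynomial.sum_def]
  refine Finset.sum_congr rfl fun i _ => ?_
  simp only [HahnSeries.single_pow, one_pow, nsmul_eq_mul, mul_neg_one]
  have halg : (algebraMap F (LaurentSeries F)) (p.coeff i) =
      HahnSeries.single (0 : ℤ) (p.coeff i) := by
    rw [HahnSeries.algebraMap_apply' (Γ := ℤ) (R := F)]
    rw [PowerSeries.algebraMap_apply]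
    simp only [Algebra.algebraMap_self_apply, HahnSeries.ofPowerSeries_C, HahnSeries.C_apply]
  rw [halg, HahnSeries.single_mul_single, zero_add, mul_one]

lemma polyToL_coeff (p : Polynomial F) (j : ℕ) :
    (polyToL F p).coeff (-(j : ℤ)) = p.coeff j := by
  classical
  rw [polyToL_eq_sum, sum_coeff]
  simp only [HahnSeries.coeff_single, neg_inj, Nat.cast_inj]
  rw [Finset.sum_ite_eq p.support j (fun i => p.coeff i)]
  by_cases hj : j ∈ p.support
  · rw [if_pos hj]
  · rw [if_neg hj, (Polynomial.notMem_support_iff.mp hj)]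

lemma polyToL_ne_zero {p : Polynomial F} (hp : p ≠ 0) : polyToL F p ≠ 0 := by
  intro h
  apply hp
  ext j
  have := polyToL_coeff (F := F) p j
  rw [h] at this
  simpa using this.symm

lemma polyToL_order {p : Polynomial F} (hp : p ≠ 0) :
    (polyToL F p).order = -(p.natDegree : ℤ) := by
  have hne : (polyToL F p).coeff (-(p.natDegree : ℤ)) ≠ 0 := by
    rw [polyToL_coeff]
    exact Polynomial.leadingCoeff_ne_zero.mpr hp
  refine le_antisymm (HahnSeries.order_le_of_coeff_ne_zero hne) ?_
  by_contra hlt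
  push_neg at hlt
  have h0 : polyToL F p ≠ 0 := polyToL_ne_zero hp
  have hco := HahnSeries.coeff_order_eq_zero.not.mpr h0
  set g := (polyToL F p).order with hg
  have hgneg : g < 0 := lt_of_lt_of_le hlt (by simp)
  have hrepr : g = -(((-g).toNat : ℕ) : ℤ) := by omega
  have hbig : (p.natDegree : ℤ) < ((-g).toNat : ℤ) := by omega
  apply hco
  rw [hrepr, polyToL_coeff]
  exact Polynomial.coeff_eq_zero_of_natDegree_lt (by exact_mod_cast hbig)

lemma lnorm_polyToL {p : Polynomial F} (hp : p ≠ 0) :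
    lnorm F (polyToL F p) = (Fintype.card F : ℝ) ^ (p.natDegree : ℤ) := by
  rw [lnorm, if_neg (polyToL_ne_zero hp), polyToL_order hp, neg_neg]

lemma one_le_lnorm_polyToL {p : Polynomial F} (hp : p ≠ 0) :
    1 ≤ lnorm F (polyToL F p) := by
  rw [lnorm_polyToL hp]
  exact one_le_zpow₀ (one_lt_K (F := F)).le (by positivity)

lemma lnorm_lt_one_le {x : LaurentSeries F} (hx : lnorm F x < 1) :
    lnorm F x ≤ ((Fintype.card F : ℝ))⁻¹ := by
  rcases eq_or_ne x 0 with rfl | hx0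
  · rw [lnorm_zero]; positivity
  rw [lnorm, if_neg hx0] at hx ⊢
  have h1 : (Fintype.card F : ℝ) ^ (-x.order) < (Fintype.card F : ℝ) ^ (0 : ℤ) := by
    simpa using hx
  have h2 : -x.order < 0 := (zpow_lt_zpow_iff_right₀ (one_lt_K (F := F))).mp h1
  calc (Fintype.card F : ℝ) ^ (-x.order) ≤ (Fintype.card F : ℝ) ^ (-1 : ℤ) :=
        zpow_le_zpow_right₀ (one_lt_K (F := F)).le (by omega)
    _ = ((Fintype.card F : ℝ))⁻¹ := by simp

end Aux

/-- For `m, n ≥ 1`, a nonzero `q ∈ F[X]^m` and `p ∈ F[X]^n`, there is an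
`m × n` matrix `A` over `L` with `‖A‖_∞ < 1` and `q A = p` if and only if
`‖p‖_∞ < ‖q‖_∞`. -/
theorem exists_matrix_in_unit_ball_iff
    {F : Type*} [Field F] [Fintype F]
    (m n : ℕ) (hm : 1 ≤ m) (hn : 1 ≤ n)
    (q : Fin m → Polynomial F) (hq : q ≠ 0)
    (p : Fin n → Polynomial F) :
    (∃ A : Fin m → Fin n → LaurentSeries F,
        (∀ i j, lnorm F (A i j) < 1) ∧ ∀ j, rowMul F q A j = polyToL F (p j)) ↔
      pvnorm F p < pvnorm F q := by
  haveI : Nonempty (Fin m) := Fin.pos_iff_nonempty.mp hm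
  haveI : Nonempty (Fin n) := Fin.pos_iff_nonempty.mp hn
  set K : ℝ := (Fintype.card F : ℝ) with hKdef
  have hK : 1 < K := one_lt_K (F := F)
  have hbddq : BddAbove (Set.range fun i => lnorm F (polyToL F (q i))) :=
    (Set.finite_range _).bddAbove
  have hbddp : BddAbove (Set.range fun j => lnorm F (polyToL F (p j))) :=
    (Set.finite_range _).bddAbove
  have hle_q : ∀ i, lnorm F (polyToL F (q i)) ≤ pvnorm F q :=
    fun i => le_ciSup hbddq i
  have hle_p : ∀ j, lnorm F (polyToL F (p j)) ≤ pvnorm F p :=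
    fun j => le_ciSup hbddp j
  obtain ⟨i1, hi1⟩ : ∃ i, q i ≠ 0 := by
    by_contra h
    push_neg at h
    exact hq (funext h)
  have hqpos : 0 < pvnorm F q :=
    lt_of_lt_of_le (lnorm_pos (polyToL_ne_zero hi1)) (hle_q i1)
  constructor
  · rintro ⟨A, hA, hrow⟩
    have hstep : pvnorm F p ≤ pvnorm F q * K⁻¹ := by
      refine ciSup_le fun j => ?_
      show lnorm F (polyToL F (p j)) ≤ pvnorm F q * K⁻¹
      rw [← hrow j, rowMul]
      refine lnorm_sum_le _ _ (by positivity) fun i _ => ?_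
      rw [lnorm_mul]
      exact mul_le_mul (hle_q i) (lnorm_lt_one_le (hA i j)) (lnorm_nonneg _)
        hqpos.le
    calc pvnorm F p ≤ pvnorm F q * K⁻¹ := hstep
      _ < pvnorm F q * 1 := by
          exact mul_lt_mul_of_pos_left (inv_lt_one_of_one_lt₀ hK) hqpos
      _ = pvnorm F q := mul_one _
  · intro hlt
    obtain ⟨i0, hi0⟩ : ∃ i, lnorm F (polyToL F (q i)) = pvnorm F q :=
      exists_eq_ciSup_of_finite
    have hq0 : polyToL F (q i0) ≠ 0 := by
      intro h
      rw [h, lnorm_zero] at hi0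
      exact hqpos.ne hi0
    refine ⟨fun i j => if i = i0 then polyToL F (p j) / polyToL F (q i0) else 0, ?_, ?_⟩
    · intro i j
      dsimp only
      by_cases h : i = i0
      · rw [if_pos h, lnorm_div _ _ hq0, hi0]
        rw [div_lt_one hqpos]
        exact lt_of_le_of_lt (hle_p j) hlt
      · rw [if_neg h, lnorm_zero]; exact one_pos
    · intro j
      rw [rowMul]
      rw [Finset.sum_eq_single i0]
      · rw [if_pos rfl, mul_comm, div_mul_cancel₀ _ hq0]
      · intro i _ hi
        rw [if_neg hi, mul_zero]
      · intro h
        exact absurd (Finset.mem_univ i0) h
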